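/- With the notation of the context, for every particle array v ∈ Z^{T·M} and every index path k ∈ {1,…,M}^T one has b^{(1)}_{θ,ϑ}(k | v) · r_{𝟏,v}(θ,ϑ) = b_{θ,ϑ}(k | v) · r_{v^{(𝟏)},v^{(k)}}(θ,ϑ); that is, the weighted selection probabilities b^{(1)}_{θ,ϑ} are obtained by reweighting the selection probabilities b_{θ,ϑ} by the corresponding acceptance ratios, normalised by the averaged ratio r_{𝟏,v}(θ,ϑ). -/

import Mathlib

open MeasureTheory Finset

namespace MHAARRB6

variable {Z : Type*}

/-- The path `v^{(k)}` extracted from the particle array `v`. -/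
def pathOf (n m : ℕ) (v : Fin (n + 1) → Fin (m + 1) → Z)
    (k : Fin (n + 1) → Fin (m + 1)) : Fin (n + 1) → Z := fun t => v t (k t)

/-- The constant index path `𝟏`. -/
def onePath (n m : ℕ) : Fin (n + 1) → Fin (m + 1) := fun _ => 0

/-- Selection probabilities: this gives `b_{θ,ϑ}` for `γ = γ_{θ,ϑ}` and
`b^{(1)}_{θ,ϑ}` for `γ = γ_ϑ`. -/
noncomputable def bSel (n m : ℕ) (γ qp : Fin (n + 1) → Z → ℝ)
    (k : Fin (n + 1) → Fin (m + 1)) (v : Fin (n + 1) → Fin (m + 1) → Z) : ℝ :=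
  ∏ t, (γ t (v t (k t)) / qp t (v t (k t))) / (∑ j, γ t (v t j) / qp t (v t j))

/-- The acceptance ratio `r_{z,z'}(θ,ϑ)`. -/
noncomputable def accRatio (n : ℕ) (ηθ ηϑ qθϑ qϑθ : ℝ)
    (γθ γϑ γθϑ : Fin (n + 1) → Z → ℝ) (z z' : Fin (n + 1) → Z) : ℝ :=
  qϑθ * ηϑ / (qθϑ * ηθ) *
    ∏ t, (γθϑ t (z t) / γθ t (z t)) * (γϑ t (z' t) / γθϑ t (z' t))

/-- The averaged ratio `r_{𝟏,v}(θ,ϑ) = ∑_k b_{θ,ϑ}(k|v) r_{v^{(𝟏)},v^{(k)}}(θ,ϑ)`. -/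
noncomputable def rBar (n m : ℕ) (ηθ ηϑ qθϑ qϑθ : ℝ)
    (γθ γϑ γθϑ qp : Fin (n + 1) → Z → ℝ)
    (l : Fin (n + 1) → Fin (m + 1)) (v : Fin (n + 1) → Fin (m + 1) → Z) : ℝ :=
  ∑ k : Fin (n + 1) → Fin (m + 1),
    bSel n m γθϑ qp k v *
      accRatio n ηθ ηϑ qθϑ qϑθ γθ γϑ γθϑ (pathOf n m v l) (pathOf n m v k)

/-- For every particle array `v` and index path `k`,
`b^{(1)}_{θ,ϑ}(k|v) · r_{𝟏,v}(θ,ϑ) = b_{θ,ϑ}(k|v) · r_{v^{(𝟏)},v^{(k)}}(θ,ϑ)`: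
the weighted selection probabilities `b^{(1)}` arise from reweighting `b` by the
acceptance ratios, normalised by the averaged ratio. -/
theorem weighted_selection_identity
    [MeasurableSpace Z] (n m : ℕ)
    (γθ γϑ γθϑ qp : Fin (n + 1) → Z → ℝ)
    (hγθm : ∀ t, Measurable (γθ t)) (hγϑm : ∀ t, Measurable (γϑ t))
    (hγθϑm : ∀ t, Measurable (γθϑ t)) (hqpm : ∀ t, Measurable (qp t))
    (hγθ : ∀ t z, 0 < γθ t z) (hγϑ : ∀ t z, 0 < γϑ t z)
    (hγθϑ : ∀ t z, 0 < γθϑ t z) (hqp : ∀ t z, 0 < qp t z)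
    (ηθ ηϑ qθϑ qϑθ : ℝ)
    (hηθ : 0 < ηθ) (hηϑ : 0 < ηϑ) (hqθϑ : 0 < qθϑ) (hqϑθ : 0 < qϑθ)
    (v : Fin (n + 1) → Fin (m + 1) → Z) (k : Fin (n + 1) → Fin (m + 1)) :
    bSel n m γϑ qp k v * rBar n m ηθ ηϑ qθϑ qϑθ γθ γϑ γθϑ qp (onePath n m) v
      = bSel n m γθϑ qp k v *
          accRatio n ηθ ηϑ qθϑ qϑθ γθ γϑ γθϑ
            (pathOf n m v (onePath n m)) (pathOf n m v k) := by
  classical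
  set Sθϑ : Fin (n + 1) → ℝ := fun t => ∑ j, γθϑ t (v t j) / qp t (v t j) with hSθϑdef
  set Sϑ : Fin (n + 1) → ℝ := fun t => ∑ j, γϑ t (v t j) / qp t (v t j) with hSϑdef
  have hSθϑpos : ∀ t, 0 < Sθϑ t := fun t =>
    Finset.sum_pos (fun j _ => div_pos (hγθϑ _ _) (hqp _ _)) ⟨0, Finset.mem_univ 0⟩
  have hSϑpos : ∀ t, 0 < Sϑ t := fun t =>
    Finset.sum_pos (fun j _ => div_pos (hγϑ _ _) (hqp _ _)) ⟨0, Finset.mem_univ 0⟩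
  set C : ℝ := qϑθ * ηϑ / (qθϑ * ηθ) with hCdef
  set D : ℝ := C * ∏ t, (γθϑ t (v t 0) / γθ t (v t 0)) * (Sϑ t / Sθϑ t) with hDdef
  have key : ∀ l : Fin (n + 1) → Fin (m + 1),
      bSel n m γθϑ qp l v *
        accRatio n ηθ ηϑ qθϑ qϑθ γθ γϑ γθϑ (pathOf n m v (onePath n m)) (pathOf n m v l)
      = bSel n m γϑ qp l v * D := by
    intro l
    have hterm : ∀ t : Fin (n + 1),
        ((γθϑ t (v t (l t)) / qp t (v t (l t))) / Sθϑ t) *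
          ((γθϑ t (v t 0) / γθ t (v t 0)) * (γϑ t (v t (l t)) / γθϑ t (v t (l t))))
        = ((γϑ t (v t (l t)) / qp t (v t (l t))) / Sϑ t) *
          ((γθϑ t (v t 0) / γθ t (v t 0)) * (Sϑ t / Sθϑ t)) := by
      intro t
      have h1 : qp t (v t (l t)) ≠ 0 := (hqp _ _).ne'
      have h2 : Sθϑ t ≠ 0 := (hSθϑpos t).ne'
      have h3 : Sϑ t ≠ 0 := (hSϑpos t).ne'
      have h4 : γθ t (v t 0) ≠ 0 := (hγθ _ _).ne'
      have h5 : γθϑ t (v t (l t)) ≠ 0 := (hγθϑ _ _).ne'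
      field_simp
    show (∏ t, (γθϑ t (v t (l t)) / qp t (v t (l t))) / Sθϑ t) *
        (C * ∏ t, (γθϑ t (v t 0) / γθ t (v t 0)) *
          (γϑ t (v t (l t)) / γθϑ t (v t (l t))))
      = (∏ t, (γϑ t (v t (l t)) / qp t (v t (l t))) / Sϑ t) * D
    rw [hDdef]
    have hprods : (∏ t, (γθϑ t (v t (l t)) / qp t (v t (l t))) / Sθϑ t) *
        (∏ t, (γθϑ t (v t 0) / γθ t (v t 0)) *
          (γϑ t (v t (l t)) / γθϑ t (v t (l t))))
      = (∏ t, (γϑ t (v t (l t)) / qp t (v t (l t))) / Sϑ t) *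
        (∏ t, (γθϑ t (v t 0) / γθ t (v t 0)) * (Sϑ t / Sθϑ t)) := by
      rw [← Finset.prod_mul_distrib, ← Finset.prod_mul_distrib]
      exact Finset.prod_congr rfl fun t _ => hterm t
    linear_combination C * hprods
  have hsum : ∑ l : Fin (n + 1) → Fin (m + 1), bSel n m γϑ qp l v = 1 := by
    unfold bSel
    have := Finset.prod_univ_sum (fun _ : Fin (n + 1) => (Finset.univ : Finset (Fin (m + 1))))
      (fun t j => (γϑ t (v t j) / qp t (v t j)) / Sϑ t)
    rw [Fintype.piFinset_univ] at this
    rw [← this]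
    refine Finset.prod_eq_one fun t _ => ?_
    rw [← Finset.sum_div]
    exact div_self (hSϑpos t).ne'
  have hrBar : rBar n m ηθ ηϑ qθϑ qϑθ γθ γϑ γθϑ qp (onePath n m) v = D := by
    unfold rBar
    calc (∑ l : Fin (n + 1) → Fin (m + 1),
          bSel n m γθϑ qp l v *
            accRatio n ηθ ηϑ qθϑ qϑθ γθ γϑ γθϑ (pathOf n m v (onePath n m)) (pathOf n m v l))
        = ∑ l : Fin (n + 1) → Fin (m + 1), bSel n m γϑ qp l v * D := by
          exact Finset.sum_congr rfl fun l _ => key l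
      _ = (∑ l : Fin (n + 1) → Fin (m + 1), bSel n m γϑ qp l v) * D := by
          rw [Finset.sum_mul]
      _ = D := by rw [hsum, one_mul]
  rw [hrBar, ← key k]

end MHAARRB6
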